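/- Let H ⊆ ℝ be a bounded Lebesgue measurable set with λ(H) > 0. Then sup{x ∈ ℝ : λ(H ∩ [x, ∞)) > 0 and Avg(H ∩ [x, ∞)) = Avg(H)} = sup{x ∈ ℝ : λ(H ∩ (−∞, x]) = 0}, and dually inf{x ∈ ℝ : λ(H ∩ (−∞, x]) > 0 and Avg(H ∩ (−∞, x]) = Avg(H)} = inf{x ∈ ℝ : λ(H ∩ [x, ∞)) = 0}. -/

import Mathlib

open MeasureTheory

/-- The mean `Avg` by Lebesgue measure. -/
noncomputable def avg (H : Set ℝ) : ℝ := (∫ x in H, x) / (volume H).toReal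

lemma avg_lt_of_subset_Iic {A : Set ℝ} {x : ℝ} (hA : MeasurableSet A)
    (hsub : A ⊆ Set.Iic x) (h0 : volume A ≠ 0) (hfin : volume A ≠ ⊤)
    (hint : IntegrableOn id A volume) : avg A < x := by
  have hvr : 0 < (volume A).toReal := ENNReal.toReal_pos h0 hfin
  have hic : IntegrableOn (fun _ : ℝ => x) A volume :=
    integrableOn_const hfin
  have hintc : IntegrableOn (fun t => x - t) A volume := hic.sub hint
  have hnn : 0 ≤ᵐ[volume.restrict A] fun t => x - t := by
    filter_upwards [ae_restrict_mem hA] with t ht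
    simpa using hsub ht
  have hne : (∫ t in A, (x - t)) ≠ 0 := by
    intro h
    have heq : (fun t => x - t) =ᵐ[volume.restrict A] 0 :=
      (integral_eq_zero_iff_of_nonneg_ae hnn hintc).1 h
    have h1 : volume ({t : ℝ | ¬ (x - t = 0)} ∩ A) = 0 := by
      have := ae_iff.1 heq
      simpa [Measure.restrict_apply' hA] using this
    have hA0 : volume A = 0 := by
      have hsub2 : A ⊆ ({t : ℝ | ¬ (x - t = 0)} ∩ A) ∪ {x} := by
        intro t ht
        by_cases htx : t = x
        · exact Or.inr (by simp [htx])
        · exact Or.inl ⟨by simp [sub_eq_zero]; exact fun h => htx h.symm, ht⟩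
      refine le_antisymm ?_ zero_le
      calc volume A ≤ volume (({t : ℝ | ¬ (x - t = 0)} ∩ A) ∪ {x}) :=
            measure_mono hsub2
        _ ≤ volume ({t : ℝ | ¬ (x - t = 0)} ∩ A) + volume ({x} : Set ℝ) :=
            measure_union_le _ _
        _ = 0 := by simp [h1]
    exact h0 hA0
  have hposI : 0 < ∫ t in A, (x - t) :=
    lt_of_le_of_ne (integral_nonneg_of_ae hnn) (Ne.symm hne)
  have hsplit : (∫ t in A, (x - t)) = x * (volume A).toReal - ∫ t in A, t := by
    have hs : (∫ t in A, (x - t)) = (∫ _t in A, x) - ∫ t in A, t :=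
      integral_sub hic hint
    rw [hs, setIntegral_const, smul_eq_mul, mul_comm]
    rfl
  have hlt : (∫ t in A, t) < x * (volume A).toReal := by linarith [hsplit ▸ hposI]
  exact (div_lt_iff₀ hvr).2 hlt

lemma lt_avg_of_subset_Ici {A : Set ℝ} {x : ℝ} (hA : MeasurableSet A)
    (hsub : A ⊆ Set.Ici x) (h0 : volume A ≠ 0) (hfin : volume A ≠ ⊤)
    (hint : IntegrableOn id A volume) : x < avg A := by
  have hvr : 0 < (volume A).toReal := ENNReal.toReal_pos h0 hfin
  have hic : IntegrableOn (fun _ : ℝ => x) A volume :=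
    integrableOn_const hfin
  have hintc : IntegrableOn (fun t => t - x) A volume := hint.sub hic
  have hnn : 0 ≤ᵐ[volume.restrict A] fun t => t - x := by
    filter_upwards [ae_restrict_mem hA] with t ht
    simpa using hsub ht
  have hne : (∫ t in A, (t - x)) ≠ 0 := by
    intro h
    have heq : (fun t => t - x) =ᵐ[volume.restrict A] 0 :=
      (integral_eq_zero_iff_of_nonneg_ae hnn hintc).1 h
    have h1 : volume ({t : ℝ | ¬ (t - x = 0)} ∩ A) = 0 := by
      have := ae_iff.1 heq
      simpa [Measure.restrict_apply' hA] using this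
    have hA0 : volume A = 0 := by
      have hsub2 : A ⊆ ({t : ℝ | ¬ (t - x = 0)} ∩ A) ∪ {x} := by
        intro t ht
        by_cases htx : t = x
        · exact Or.inr (by simp [htx])
        · exact Or.inl ⟨by simp [sub_eq_zero]; exact htx, ht⟩
      refine le_antisymm ?_ zero_le
      calc volume A ≤ volume (({t : ℝ | ¬ (t - x = 0)} ∩ A) ∪ {x}) :=
            measure_mono hsub2
        _ ≤ volume ({t : ℝ | ¬ (t - x = 0)} ∩ A) + volume ({x} : Set ℝ) :=
            measure_union_le _ _
        _ = 0 := by simp [h1]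
    exact h0 hA0
  have hposI : 0 < ∫ t in A, (t - x) :=
    lt_of_le_of_ne (integral_nonneg_of_ae hnn) (Ne.symm hne)
  have hsplit : (∫ t in A, (t - x)) = (∫ t in A, t) - x * (volume A).toReal := by
    have hs : (∫ t in A, (t - x)) = (∫ t in A, t) - ∫ _t in A, x :=
      integral_sub hint hic
    rw [hs, setIntegral_const, smul_eq_mul, mul_comm]
    rfl
  have hlt : x * (volume A).toReal < ∫ t in A, t := by linarith [hsplit ▸ hposI]
  exact (lt_div_iff₀ hvr).2 hlt

lemma key_Ici (H : Set ℝ) (hb : Bornology.IsBounded H) (hm : MeasurableSet H)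
    (hpos : 0 < volume H) :
    {x : ℝ | 0 < volume (H ∩ Set.Ici x) ∧ avg (H ∩ Set.Ici x) = avg H} =
      {x : ℝ | volume (H ∩ Set.Iic x) = 0} := by
  obtain ⟨⟨c, hc⟩, ⟨d, hd⟩⟩ := (isBounded_iff_bddBelow_bddAbove).1 hb
  have hcd : H ⊆ Set.Icc c d := fun t ht => ⟨hc ht, hd ht⟩
  have hfin : volume H ≠ ⊤ :=
    ((measure_mono hcd).trans_lt measure_Icc_lt_top).ne
  have hint : IntegrableOn id H volume :=
    (continuous_id.integrableOn_Icc).mono_set hcd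
  ext x
  simp only [Set.mem_setOf_eq]
  constructor
  · rintro ⟨hBpos, havg⟩
    by_contra h0
    set A := H ∩ Set.Iic x with hAdef
    set B := H ∩ Set.Ici x with hBdef
    have hAm : MeasurableSet A := hm.inter measurableSet_Iic
    have hBm : MeasurableSet B := hm.inter measurableSet_Ici
    have hAfin : volume A ≠ ⊤ :=
      ((measure_mono Set.inter_subset_left).trans_lt hfin.lt_top).ne
    have hBfin : volume B ≠ ⊤ :=
      ((measure_mono Set.inter_subset_left).trans_lt hfin.lt_top).ne
    have hABd : AEDisjoint volume A B := by
      have : A ∩ B ⊆ {x} := fun t ⟨⟨_, h1⟩, ⟨_, h2⟩⟩ => le_antisymm h1 h2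
      exact measure_mono_null this (measure_singleton x)
    have hU : A ∪ B = H := by
      ext t
      constructor
      · rintro (⟨h, _⟩ | ⟨h, _⟩) <;> exact h
      · intro h
        rcases le_total t x with h' | h'
        · exact Or.inl ⟨h, h'⟩
        · exact Or.inr ⟨h, h'⟩
    have hintA : IntegrableOn id A volume := hint.mono_set Set.inter_subset_left
    have hintB : IntegrableOn id B volume := hint.mono_set Set.inter_subset_left
    have hvol : volume H = volume A + volume B := by
      rw [← hU]; exact measure_union₀ hBm.nullMeasurableSet hABd
    have hIsum : (∫ t in H, t) = (∫ t in A, t) + ∫ t in B, t := by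
      rw [← hU]; exact integral_union_ae hABd hBm.nullMeasurableSet hintA hintB
    have hrsum : (volume H).toReal = (volume A).toReal + (volume B).toReal := by
      rw [hvol]; exact ENNReal.toReal_add hAfin hBfin
    have hrA : 0 < (volume A).toReal := ENNReal.toReal_pos h0 hAfin
    have hrB : 0 < (volume B).toReal := ENNReal.toReal_pos hBpos.ne' hBfin
    have hrH : 0 < (volume H).toReal := ENNReal.toReal_pos hpos.ne' hfin
    have hIB : (∫ t in B, t) = avg H * (volume B).toReal := by
      have := havg
      rw [avg, div_eq_iff hrB.ne'] at this
      exact this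
    have hIH : (∫ t in H, t) = avg H * (volume H).toReal := by
      rw [avg, div_mul_cancel₀ _ hrH.ne']
    have hIA : (∫ t in A, t) = avg H * (volume A).toReal := by
      have : (∫ t in A, t) = (∫ t in H, t) - ∫ t in B, t := by linarith [hIsum]
      rw [this, hIH, hIB, hrsum]; ring
    have havgA : avg A = avg H := by
      rw [avg, hIA, mul_div_cancel_right₀ _ hrA.ne']
    have h1 : avg A < x :=
      avg_lt_of_subset_Iic hAm Set.inter_subset_right h0 hAfin hintA
    have h2 : x < avg B :=
      lt_avg_of_subset_Ici hBm Set.inter_subset_right hBpos.ne' hBfin hintB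
    rw [havgA] at h1
    rw [havg] at h2
    linarith
  · intro h0
    have haeq : (H ∩ Set.Ici x : Set ℝ) =ᵐ[volume] (H : Set ℝ) := by
      refine MeasureTheory.ae_eq_set.2 ⟨?_, ?_⟩
      · exact measure_mono_null (fun t ht => absurd ht.1.1 ht.2) measure_empty
      · refine measure_mono_null ?_ h0
        rintro t ⟨h1, h2⟩
        refine ⟨h1, ?_⟩
        by_contra h3
        exact h2 ⟨h1, Set.mem_Ici.2 (le_of_not_ge (fun h => h3 (Set.mem_Iic.2 h)))⟩
    have hveq : volume (H ∩ Set.Ici x) = volume H := measure_congr haeq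
    refine ⟨hveq ▸ hpos, ?_⟩
    rw [avg, avg, hveq, setIntegral_congr_set haeq]

lemma key_Iic (H : Set ℝ) (hb : Bornology.IsBounded H) (hm : MeasurableSet H)
    (hpos : 0 < volume H) :
    {x : ℝ | 0 < volume (H ∩ Set.Iic x) ∧ avg (H ∩ Set.Iic x) = avg H} =
      {x : ℝ | volume (H ∩ Set.Ici x) = 0} := by
  obtain ⟨⟨c, hc⟩, ⟨d, hd⟩⟩ := (isBounded_iff_bddBelow_bddAbove).1 hb
  have hcd : H ⊆ Set.Icc c d := fun t ht => ⟨hc ht, hd ht⟩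
  have hfin : volume H ≠ ⊤ :=
    ((measure_mono hcd).trans_lt measure_Icc_lt_top).ne
  have hint : IntegrableOn id H volume :=
    (continuous_id.integrableOn_Icc).mono_set hcd
  ext x
  simp only [Set.mem_setOf_eq]
  constructor
  · rintro ⟨hApos, havg⟩
    by_contra h0
    set A := H ∩ Set.Iic x with hAdef
    set B := H ∩ Set.Ici x with hBdef
    have hAm : MeasurableSet A := hm.inter measurableSet_Iic
    have hBm : MeasurableSet B := hm.inter measurableSet_Ici
    have hAfin : volume A ≠ ⊤ :=
      ((measure_mono Set.inter_subset_left).trans_lt hfin.lt_top).ne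
    have hBfin : volume B ≠ ⊤ :=
      ((measure_mono Set.inter_subset_left).trans_lt hfin.lt_top).ne
    have hABd : AEDisjoint volume A B := by
      have : A ∩ B ⊆ {x} := fun t ⟨⟨_, h1⟩, ⟨_, h2⟩⟩ => le_antisymm h1 h2
      exact measure_mono_null this (measure_singleton x)
    have hU : A ∪ B = H := by
      ext t
      constructor
      · rintro (⟨h, _⟩ | ⟨h, _⟩) <;> exact h
      · intro h
        rcases le_total t x with h' | h'
        · exact Or.inl ⟨h, h'⟩
        · exact Or.inr ⟨h, h'⟩
    have hintA : IntegrableOn id A volume := hint.mono_set Set.inter_subset_left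
    have hintB : IntegrableOn id B volume := hint.mono_set Set.inter_subset_left
    have hvol : volume H = volume A + volume B := by
      rw [← hU]; exact measure_union₀ hBm.nullMeasurableSet hABd
    have hIsum : (∫ t in H, t) = (∫ t in A, t) + ∫ t in B, t := by
      rw [← hU]; exact integral_union_ae hABd hBm.nullMeasurableSet hintA hintB
    have hrsum : (volume H).toReal = (volume A).toReal + (volume B).toReal := by
      rw [hvol]; exact ENNReal.toReal_add hAfin hBfin
    have hrA : 0 < (volume A).toReal := ENNReal.toReal_pos hApos.ne' hAfin
    have hrB : 0 < (volume B).toReal := ENNReal.toReal_pos h0 hBfin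
    have hrH : 0 < (volume H).toReal := ENNReal.toReal_pos hpos.ne' hfin
    have hIA : (∫ t in A, t) = avg H * (volume A).toReal := by
      have := havg
      rw [avg, div_eq_iff hrA.ne'] at this
      exact this
    have hIH : (∫ t in H, t) = avg H * (volume H).toReal := by
      rw [avg, div_mul_cancel₀ _ hrH.ne']
    have hIB : (∫ t in B, t) = avg H * (volume B).toReal := by
      have : (∫ t in B, t) = (∫ t in H, t) - ∫ t in A, t := by linarith [hIsum]
      rw [this, hIH, hIA, hrsum]; ring
    have havgB : avg B = avg H := by
      rw [avg, hIB, mul_div_cancel_right₀ _ hrB.ne']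
    have h1 : avg A < x :=
      avg_lt_of_subset_Iic hAm Set.inter_subset_right hApos.ne' hAfin hintA
    have h2 : x < avg B :=
      lt_avg_of_subset_Ici hBm Set.inter_subset_right h0 hBfin hintB
    rw [havgB] at h2
    rw [havg] at h1
    linarith
  · intro h0
    have haeq : (H ∩ Set.Iic x : Set ℝ) =ᵐ[volume] (H : Set ℝ) := by
      refine MeasureTheory.ae_eq_set.2 ⟨?_, ?_⟩
      · exact measure_mono_null (fun t ht => absurd ht.1.1 ht.2) measure_empty
      · refine measure_mono_null ?_ h0
        rintro t ⟨h1, h2⟩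
        refine ⟨h1, ?_⟩
        by_contra h3
        exact h2 ⟨h1, Set.mem_Iic.2 (le_of_not_ge (fun h => h3 (Set.mem_Ici.2 h)))⟩
    have hveq : volume (H ∩ Set.Iic x) = volume H := measure_congr haeq
    refine ⟨hveq ▸ hpos, ?_⟩
    rw [avg, avg, hveq, setIntegral_congr_set haeq]

theorem liminf_limsup_avg_eq (H : Set ℝ)
    (hb : Bornology.IsBounded H) (hm : MeasurableSet H) (hpos : 0 < volume H) :
    sSup {x : ℝ | 0 < volume (H ∩ Set.Ici x) ∧ avg (H ∩ Set.Ici x) = avg H} =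
      sSup {x : ℝ | volume (H ∩ Set.Iic x) = 0} ∧
    sInf {x : ℝ | 0 < volume (H ∩ Set.Iic x) ∧ avg (H ∩ Set.Iic x) = avg H} =
      sInf {x : ℝ | volume (H ∩ Set.Ici x) = 0} := by
  exact ⟨congrArg sSup (key_Ici H hb hm hpos),
    congrArg sInf (key_Iic H hb hm hpos)⟩
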